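/- Let ψ₀ = Γ′/Γ denote the digamma function and let λ > 0. Suppose d : (0,∞) × (0,∞) → (0,∞) is differentiable and satisfies a · exp{ψ₀(d(a,p)/p)/p} = λ for all a, p > 0. Then for all a, p > 0: (1/p²) ψ₀′(d(a,p)/p) · ∂d/∂a(a,p) = −1/a and (1/p²) ψ₀′(d(a,p)/p) · ∂d/∂p(a,p) = ψ₀(d(a,p)/p)/p² + (d(a,p)/p³) ψ₀′(d(a,p)/p). That is, the reparameterization λ = a exp{ψ₀(d/p)/p} solves the parameter-orthogonality partial differential equations for the generalized Gamma distribution with (a, p) as parameters of interest and d as nuisance parameter. -/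

import Mathlib

/-- The digamma function `ψ₀ = Γ′/Γ`. -/
noncomputable def digamma (x : ℝ) : ℝ := deriv Real.Gamma x / Real.Gamma x

lemma gamma_analytic : AnalyticOnNhd ℝ Real.Gamma (Set.Ioi 0) := by
  have hU : IsOpen {s : ℂ | 0 < s.re} := isOpen_lt continuous_const Complex.continuous_re
  have hA : AnalyticOnNhd ℂ Complex.Gamma {s : ℂ | 0 < s.re} := by
    refine DifferentiableOn.analyticOnNhd (fun s hs => ?_) hU
    refine (Complex.differentiableAt_Gamma s fun m => ?_).differentiableWithinAt
    intro h
    rw [h] at hs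
    simp only [Set.mem_setOf_eq, Complex.neg_re, Complex.natCast_re] at hs
    linarith [Nat.cast_nonneg (α := ℝ) m]
  intro x hx
  have : Real.Gamma = fun y : ℝ => (Complex.Gamma (y : ℂ)).re := by
    funext y
    rw [Complex.Gamma_ofReal, Complex.ofReal_re]
  rw [this]
  exact (Complex.reCLM.analyticAt _).comp
    (((hA x (by simpa using hx)).restrictScalars).comp (Complex.ofRealCLM.analyticAt x))

lemma digamma_diff {x : ℝ} (hx : 0 < x) : DifferentiableAt ℝ digamma x := by
  have h1 := (gamma_analytic.deriv x hx).differentiableAt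
  have h2 := (gamma_analytic x hx).differentiableAt
  exact h1.div h2 (Real.Gamma_pos_of_pos hx).ne'

/-- The reparameterization `λ = a · exp{ψ₀(d/p)/p}` solves the parameter-orthogonality
partial differential equations for the generalized Gamma distribution with `(a, p)` as
parameters of interest and `d` as nuisance parameter. -/
theorem stmt2 (lam : ℝ) (hlam : 0 < lam)
    (d : ℝ → ℝ → ℝ)
    (hpos : ∀ a p : ℝ, 0 < a → 0 < p → 0 < d a p)
    (hdiff : ∀ a p : ℝ, 0 < a → 0 < p →
      DifferentiableAt ℝ (fun q : ℝ × ℝ => d q.1 q.2) (a, p))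
    (heq : ∀ a p : ℝ, 0 < a → 0 < p →
      a * Real.exp (digamma (d a p / p) / p) = lam) :
    ∀ a p : ℝ, 0 < a → 0 < p →
      (1 / p ^ 2) * deriv digamma (d a p / p) * deriv (fun a' => d a' p) a
          = -(1 / a) ∧
      (1 / p ^ 2) * deriv digamma (d a p / p) * deriv (fun p' => d a p') p
          = digamma (d a p / p) / p ^ 2
            + d a p / p ^ 3 * deriv digamma (d a p / p) := by
  have key : ∀ a p : ℝ, 0 < a → 0 < p →
      digamma (d a p / p) = p * (Real.log lam - Real.log a) := by
    intro a p ha hp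
    have h1 : Real.exp (digamma (d a p / p) / p) = lam / a := by
      rw [eq_div_iff ha.ne', mul_comm]
      exact heq a p ha hp
    have h2 : digamma (d a p / p) / p = Real.log lam - Real.log a := by
      have := congrArg Real.log h1
      rwa [Real.log_exp, Real.log_div hlam.ne' ha.ne'] at this
    rw [div_eq_iff hp.ne'] at h2
    linarith [h2]
  intro a p ha hp
  have hp0 : (p : ℝ) ≠ 0 := hp.ne'
  have ha0 : (a : ℝ) ≠ 0 := ha.ne'
  have hx : 0 < d a p / p := div_pos (hpos a p ha hp) hp
  have hdg : DifferentiableAt ℝ digamma (d a p / p) := digamma_diff hx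
  have hu : DifferentiableAt ℝ (fun a' => d a' p) a :=
    (hdiff a p ha hp).comp (f := fun a' : ℝ => (a', p)) a (DifferentiableAt.prodMk differentiableAt_id (differentiableAt_const p))
  have hv : DifferentiableAt ℝ (fun p' => d a p') p :=
    (hdiff a p ha hp).comp (f := fun p' : ℝ => (a, p')) p ((differentiableAt_const a).prodMk differentiableAt_id)
  set ψ := deriv digamma (d a p / p) with hψ
  set Du := deriv (fun a' => d a' p) a with hDu
  set Dv := deriv (fun p' => d a p') p with hDv
  have E1 : (fun a' => digamma (d a' p / p)) =ᶠ[nhds a]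
      (fun a' => p * (Real.log lam - Real.log a')) := by
    filter_upwards [eventually_gt_nhds ha] with a' ha'
    exact key a' p ha' hp
  have E2 : (fun p' => digamma (d a p' / p')) =ᶠ[nhds p]
      (fun p' => p' * (Real.log lam - Real.log a)) := by
    filter_upwards [eventually_gt_nhds hp] with p' hp'
    exact key a p' ha hp'
  have eq1 : ψ * (Du / p) = p * -a⁻¹ := by
    have H1 : HasDerivAt (fun a' => digamma (d a' p / p)) (ψ * (Du / p)) a :=
      HasDerivAt.comp (h := fun a' => d a' p / p) a hdg.hasDerivAt (hu.hasDerivAt.div_const p)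
    have H1' : HasDerivAt (fun a' => p * (Real.log lam - Real.log a')) (ψ * (Du / p)) a :=
      H1.congr_of_eventuallyEq E1.symm
    have Hr : HasDerivAt (fun a' => p * (Real.log lam - Real.log a')) (p * -a⁻¹) a :=
      ((Real.hasDerivAt_log ha.ne').const_sub (Real.log lam)).const_mul p
    exact H1'.unique Hr
  have eq2 : ψ * ((Dv * p - d a p * 1) / p ^ 2) = 1 * (Real.log lam - Real.log a) := by
    have Hv2 : HasDerivAt (fun p' => d a p' / p') ((Dv * p - d a p * 1) / p ^ 2) p := by
      exact hv.hasDerivAt.div (hasDerivAt_id p) hp0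
    have H2 : HasDerivAt (fun p' => digamma (d a p' / p'))
        (ψ * ((Dv * p - d a p * 1) / p ^ 2)) p :=
      HasDerivAt.comp (h := fun p' => d a p' / p') p hdg.hasDerivAt Hv2
    have H2' : HasDerivAt (fun p' => p' * (Real.log lam - Real.log a))
        (ψ * ((Dv * p - d a p * 1) / p ^ 2)) p :=
      H2.congr_of_eventuallyEq E2.symm
    have Hr : HasDerivAt (fun p' => p' * (Real.log lam - Real.log a))
        (1 * (Real.log lam - Real.log a)) p :=
      (hasDerivAt_id p).mul_const _
    exact H2'.unique Hr
  constructor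
  · field_simp at eq1 ⊢
    linarith [eq1]
  · rw [key a p ha hp]
    field_simp at eq2 ⊢
    linear_combination eq2
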